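/- For any two real m×n matrices X and Y (with n ≤ m), the Frobenius inner product satisfies ⟨X, Y⟩ ≤ ⟨σ(X), σ(Y)⟩, where σ(X) denotes the vector of singular values of X arranged in nonincreasing order. -/

import Mathlib

open Filter Topology Matrix

noncomputable section

abbrev Mat (m n : ℕ) := Matrix (Fin m) (Fin n) ℝ

namespace Paper

/-- Frobenius (trace) inner product on real matrices. -/
def finner {m n : ℕ} (X Y : Mat m n) : ℝ := ∑ i, ∑ j, X i j * Y i j

/-- Frobenius norm. -/
def fnorm {m n : ℕ} (X : Mat m n) : ℝ := Real.sqrt (finner X X)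

/-- Euclidean inner product on `ℝⁿ`. -/
def vinner {n : ℕ} (x y : Fin n → ℝ) : ℝ := ∑ i, x i * y i

/-- Euclidean norm on `ℝⁿ`. -/
def vnorm {n : ℕ} (x : Fin n → ℝ) : ℝ := Real.sqrt (vinner x x)

/-- Eigenvalues of a real symmetric matrix, arranged in nonincreasing order. -/
def eigs {k : ℕ} (A : Matrix (Fin k) (Fin k) ℝ) (hA : A.IsHermitian) : Fin k → ℝ :=
  fun i => hA.eigenvalues (Tuple.sort (fun j => -(hA.eigenvalues j)) i)

/-- Singular values of a real `m × n` matrix, arranged in nonincreasing order. -/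
def svals {m n : ℕ} (X : Mat m n) : Fin n → ℝ :=
  fun i => Real.sqrt (eigs _ (by rw [Matrix.IsHermitian, Matrix.conjTranspose_eq_transpose_of_trivial,
    Matrix.transpose_mul, Matrix.transpose_transpose] : (Xᵀ * X).IsHermitian) i)

lemma isHermitian_transpose_mul_self {m n : ℕ} (X : Mat m n) : (Xᵀ * X).IsHermitian := by
  rw [Matrix.IsHermitian, Matrix.conjTranspose_eq_transpose_of_trivial,
    Matrix.transpose_mul, Matrix.transpose_transpose]

/-- The `m × n` matrix with `x` on the diagonal and zeros elsewhere. -/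
def mdiag {m n : ℕ} (x : Fin n → ℝ) : Mat m n :=
  fun i j => if (i : ℕ) = (j : ℕ) then x j else 0

/-- The symmetric block matrix `B(X) = [[0, X], [Xᵀ, 0]]`, reindexed over `Fin (m+n)`. -/
def bmat {m n : ℕ} (X : Mat m n) : Matrix (Fin (m + n)) (Fin (m + n)) ℝ :=
  Matrix.reindex finSumFinEquiv finSumFinEquiv (Matrix.fromBlocks 0 X Xᵀ 0)

lemma bmat_isHermitian {m n : ℕ} (X : Mat m n) : (bmat X).IsHermitian := by
  rw [Matrix.IsHermitian]
  ext i j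
  simp only [bmat, Matrix.conjTranspose_apply, Matrix.reindex_apply, Matrix.submatrix_apply,
    star_trivial]
  rcases hi : finSumFinEquiv.symm i with a | a <;> rcases hj : finSumFinEquiv.symm j with b | b <;>
    simp [Matrix.fromBlocks, Matrix.transpose_apply]

/-- Eigenvalues of `B(X)` in nonincreasing order. -/
def beigs {m n : ℕ} (X : Mat m n) : Fin (m + n) → ℝ :=
  eigs (bmat X) (bmat_isHermitian X)

/-- `Q` is a signed permutation matrix. -/
def IsSignedPerm {n : ℕ} (Q : Matrix (Fin n) (Fin n) ℝ) : Prop :=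
  ∃ (e : Equiv.Perm (Fin n)) (s : Fin n → ℝ), (∀ i, s i = 1 ∨ s i = -1) ∧
    ∀ i j, Q i j = if j = e i then s i else 0

/-- A set of vectors invariant under all signed permutations. -/
def AbsSymSet {n : ℕ} (K : Set (Fin n → ℝ)) : Prop :=
  ∀ Q, IsSignedPerm Q → ∀ x ∈ K, Q.mulVec x ∈ K

/-- An extended-real-valued absolutely symmetric function. -/
def AbsSymFun {n : ℕ} (f : (Fin n → ℝ) → EReal) : Prop :=
  ∀ Q, IsSignedPerm Q → ∀ x, f (Q.mulVec x) = f x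

/-- Euclidean distance from a point to a set in `ℝⁿ`. -/
def vdist {n : ℕ} (x : Fin n → ℝ) (K : Set (Fin n → ℝ)) : ℝ :=
  sInf ((fun y => vnorm (x - y)) '' K)

/-- Frobenius distance from a matrix to a set of matrices. -/
def mdist {m n : ℕ} (X : Mat m n) (Γ : Set (Mat m n)) : ℝ :=
  sInf ((fun Y => fnorm (X - Y)) '' Γ)

section Variational

variable {E : Type*} [AddCommGroup E] [Module ℝ E] [TopologicalSpace E]

/-- The subderivative `dg(x)(w) = liminf_{t↓0, w'→w} (g(x+tw') - g(x))/t`. -/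
def subderiv (g : E → EReal) (x w : E) : EReal :=
  liminf (fun p : ℝ × E => ((p.1⁻¹ : ℝ) : EReal) * (g (x + p.1 • p.2) - g x))
    ((𝓝[>] (0 : ℝ)) ×ˢ 𝓝 w)

/-- The second-order difference quotient `Δ²_τ g(x | v)(w)`. -/
def secondQuot (ip : E → E → ℝ) (g : E → EReal) (x v : E) (τ : ℝ) (w : E) : EReal :=
  ((2 / τ ^ 2 : ℝ) : EReal) * (g (x + τ • w) - g x - ((τ * ip v w : ℝ) : EReal))

/-- The second subderivative `d²g(x | v)(w)`. -/
def secondSubderiv (ip : E → E → ℝ) (g : E → EReal) (x v w : E) : EReal :=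
  liminf (fun p : ℝ × E => secondQuot ip g x v p.1 p.2) ((𝓝[>] (0 : ℝ)) ×ˢ 𝓝 w)

/-- The parabolic difference quotient `Δ²_τ g(x)(w | z)`. -/
def parabQuot (g : E → EReal) (x w : E) (τ : ℝ) (z : E) : EReal :=
  ((2 / τ ^ 2 : ℝ) : EReal) *
    (g (x + τ • w + (τ ^ 2 / 2) • z) - g x - ((τ : ℝ) : EReal) * subderiv g x w)

/-- The parabolic subderivative `d²g(x)(w | z)`. -/
def parabolicSubderiv (g : E → EReal) (x w z : E) : EReal :=
  liminf (fun p : ℝ × E => parabQuot g x w p.1 p.2) ((𝓝[>] (0 : ℝ)) ×ˢ 𝓝 z)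

/-- Parabolic epi-differentiability of `g` at `x` for `w`. -/
def ParabEpiDiffAt (g : E → EReal) (x w : E) : Prop :=
  (∃ z, parabolicSubderiv g x w z < ⊤) ∧
  ∀ z : E, ∀ t : ℕ → ℝ, (∀ k, 0 < t k) → Tendsto t atTop (𝓝 0) →
    ∃ zk : ℕ → E, Tendsto zk atTop (𝓝 z) ∧
      Tendsto (fun k => parabQuot g x w (t k) (zk k)) atTop (𝓝 (parabolicSubderiv g x w z))

/-- The (contingent) tangent cone to `C` at `x`. -/
def tangentConeOf (C : Set E) (x : E) : Set E :=
  {w | ∃ t : ℕ → ℝ, ∃ w' : ℕ → E, (∀ k, 0 < t k) ∧ Tendsto t atTop (𝓝 0) ∧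
    Tendsto w' atTop (𝓝 w) ∧ ∀ k, x + t k • w' k ∈ C}

/-- The second-order tangent set to `C` at `x` for `w`. -/
def tangentCone2Of (C : Set E) (x w : E) : Set E :=
  {u | ∃ t : ℕ → ℝ, ∃ u' : ℕ → E, (∀ k, 0 < t k) ∧ Tendsto t atTop (𝓝 0) ∧
    Tendsto u' atTop (𝓝 u) ∧ ∀ k, x + t k • w + (t k ^ 2 / 2) • u' k ∈ C}

/-- Parabolic derivability of the set `C` at `x` for `w`. -/
def ParabolicallyDerivable (C : Set E) (x w : E) : Prop :=
  (tangentCone2Of C x w).Nonempty ∧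
  ∀ u ∈ tangentCone2Of C x w, ∃ ε > (0 : ℝ), ∃ ξ : ℝ → E,
    (∀ t ∈ Set.Icc (0 : ℝ) ε, ξ t ∈ C) ∧ ξ 0 = x ∧
    Tendsto (fun t : ℝ => t⁻¹ • (ξ t - x)) (𝓝[>] 0) (𝓝 w) ∧
    Tendsto (fun t : ℝ => (2 / t ^ 2) • (ξ t - x - t • w)) (𝓝[>] 0) (𝓝 u)

/-- The convex subdifferential of `g` at `x` (w.r.t. the pairing `ip`). -/
def convSubdiff (ip : E → E → ℝ) (g : E → EReal) (x : E) : Set E :=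
  {v | ∀ y, ((ip v (y - x) : ℝ) : EReal) + g x ≤ g y}

/-- Convexity for extended-real-valued functions. -/
def ConvexEReal (g : E → EReal) : Prop :=
  ∀ x y : E, ∀ t : ℝ, 0 ≤ t → t ≤ 1 →
    g (t • x + (1 - t) • y) ≤ ((t : ℝ) : EReal) * g x + ((1 - t : ℝ) : EReal) * g y

end Variational

/-- Local Lipschitz continuity of `f` relative to its domain (everywhere on the domain). -/
def LocLipRelDom {n : ℕ} (f : (Fin n → ℝ) → EReal) : Prop :=
  ∀ x, f x ≠ ⊤ → ∃ l ≥ (0 : ℝ), ∃ U ∈ 𝓝 x, ∀ y ∈ U, ∀ z ∈ U, f y ≠ ⊤ → f z ≠ ⊤ →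
    |(f y).toReal - (f z).toReal| ≤ l * vnorm (y - z)

/-- The columns of `U` with indices `r, r+1, …, k-1`. -/
def colsFrom {k : ℕ} (r : ℕ) (U : Matrix (Fin k) (Fin k) ℝ) :
    Matrix (Fin k) (Fin (k - r)) ℝ :=
  fun i j => U i ⟨r + (j : ℕ), by have := j.isLt; omega⟩

/-- The first `r` columns of `U`. -/
def firstCols {k : ℕ} (r : ℕ) (h : r ≤ k) (U : Matrix (Fin k) (Fin k) ℝ) :
    Matrix (Fin k) (Fin r) ℝ :=
  fun i j => U i (Fin.castLE h j)

/-- The submatrix of `M` with rows `a ≤ · < b` and columns `c ≤ · < d`. -/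
def subBlock {p q : ℕ} (M : Matrix (Fin p) (Fin q) ℝ) (a b c d : ℕ)
    (h1 : b ≤ p) (h2 : d ≤ q) : Matrix (Fin (b - a)) (Fin (d - c)) ℝ :=
  fun i j => M ⟨a + (i : ℕ), by have := i.isLt; omega⟩ ⟨c + (j : ℕ), by have := j.isLt; omega⟩

/-- Nuclear norm: the sum of all singular values. -/
def nucNorm {m n : ℕ} (A : Mat m n) : ℝ := ∑ j, svals A j

/-- `Ψₙ(X) = σ_{r+1}(X) + ⋯ + σ_n(X)`, the sum of the `n - r` smallest singular values. -/
def psiN {m n : ℕ} (r : ℕ) (X : Mat m n) : ℝ :=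
  ∑ s : Fin n, if r ≤ (s : ℕ) then svals X s else 0

/-- The regular (Fréchet) subdifferential of a real-valued function on matrices. -/
def regSubdiff {m n : ℕ} (g : Mat m n → ℝ) (X : Mat m n) : Set (Mat m n) :=
  {V | ∀ ε > (0 : ℝ), ∀ᶠ Y in 𝓝 X, g X + finner V (Y - X) - ε * fnorm (Y - X) ≤ g Y}

/-- Two square matrices admit a simultaneous ordered spectral decomposition. -/
def SimSpec {k : ℕ} (A B : Matrix (Fin k) (Fin k) ℝ) : Prop :=
  ∃ (W : Matrix (Fin k) (Fin k) ℝ) (a b : Fin k → ℝ), Wᵀ * W = 1 ∧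
    Antitone a ∧ Antitone b ∧
    A = W * Matrix.diagonal a * Wᵀ ∧ B = W * Matrix.diagonal b * Wᵀ

/-- Two rectangular matrices admit a simultaneous ordered singular value decomposition. -/
def SimSVD {p q : ℕ} (A B : Matrix (Fin p) (Fin q) ℝ) : Prop :=
  ∃ (U : Matrix (Fin p) (Fin p) ℝ) (V : Matrix (Fin q) (Fin q) ℝ)
    (a b : Fin q → ℝ), Uᵀ * U = 1 ∧ Vᵀ * V = 1 ∧
    Antitone a ∧ Antitone b ∧ (∀ j, 0 ≤ a j) ∧ (∀ j, 0 ≤ b j) ∧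
    A = U * mdiag (m := p) a * Vᵀ ∧ B = U * mdiag (m := p) b * Vᵀ

lemma eigs_antitone {k : ℕ} (A : Matrix (Fin k) (Fin k) ℝ) (hA : A.IsHermitian) :
    Antitone (eigs A hA) := by
  have h := Tuple.monotone_sort (fun j => -(hA.eigenvalues j))
  intro i j hij
  have := h hij
  simp only [Function.comp] at this
  unfold eigs
  linarith

lemma svals_nonneg {m n : ℕ} (X : Mat m n) (i : Fin n) : 0 ≤ svals X i :=
  Real.sqrt_nonneg _

lemma svals_antitone {m n : ℕ} (X : Mat m n) : Antitone (svals X) :=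
  fun i j hij => Real.sqrt_le_sqrt (eigs_antitone _ _ hij)

lemma eigs_nonneg {m n : ℕ} (X : Mat m n) (i : Fin n) :
    0 ≤ eigs _ (Paper.isHermitian_transpose_mul_self X) i :=
  (Matrix.posSemidef_conjTranspose_mul_self X).eigenvalues_nonneg _

lemma sq_svals {m n : ℕ} (X : Mat m n) (i : Fin n) :
    svals X i * svals X i = eigs _ (Paper.isHermitian_transpose_mul_self X) i :=
  Real.mul_self_sqrt (eigs_nonneg X i)

/-- ordered spectral decomposition -/
lemma exists_ordered_spectral {k : ℕ} (A : Matrix (Fin k) (Fin k) ℝ) (hA : A.IsHermitian) :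
    ∃ V : Matrix (Fin k) (Fin k) ℝ, Vᵀ * V = 1 ∧ V * Vᵀ = 1 ∧
      A = V * Matrix.diagonal (eigs A hA) * Vᵀ := by
  classical
  set e := Tuple.sort (fun j => -(hA.eigenvalues j)) with he
  set V₀ : Matrix (Fin k) (Fin k) ℝ := (hA.eigenvectorUnitary : Matrix (Fin k) (Fin k) ℝ) with hV0
  have hV0unit : V₀ᵀ * V₀ = 1 := by
    have := hA.eigenvectorUnitary.2.1
    simpa [hV0, Matrix.star_eq_conjTranspose, Matrix.conjTranspose_eq_transpose_of_trivial] using this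
  have hspec : A = V₀ * Matrix.diagonal hA.eigenvalues * V₀ᵀ := by
    have := hA.spectral_theorem
    simpa [hV0, Matrix.star_eq_conjTranspose, Matrix.conjTranspose_eq_transpose_of_trivial,
      Function.comp] using this
  refine ⟨Matrix.of fun i j => V₀ i (e j), ?_, ?_, ?_⟩
  · ext i j
    have := congrFun (congrFun hV0unit (e i)) (e j)
    simp only [Matrix.mul_apply, Matrix.transpose_apply, Matrix.of_apply] at this ⊢
    rw [this]
    simp [Matrix.one_apply, EmbeddingLike.apply_eq_iff_eq]
  · have h1 : V₀ * V₀ᵀ = 1 := mul_eq_one_comm.mp hV0unit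
    ext i j
    have := congrFun (congrFun h1 i) j
    simp only [Matrix.mul_apply, Matrix.transpose_apply, Matrix.of_apply] at this ⊢
    rw [← this]
    exact Fintype.sum_equiv e _ _ (fun k => rfl)
  · have trid : ∀ (W : Matrix (Fin k) (Fin k) ℝ) (d : Fin k → ℝ) (i j : Fin k),
        (W * Matrix.diagonal d * Wᵀ) i j = ∑ x, W i x * d x * W j x := by
      intro W d i j
      rw [Matrix.mul_apply]
      simp [Matrix.mul_diagonal, Matrix.transpose_apply]
    ext i j
    have hrhs := congrFun (congrFun hspec i) j
    rw [trid] at hrhs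
    rw [hrhs, trid]
    exact (Fintype.sum_equiv e (fun x => V₀ i (e x) * eigs A hA x * V₀ j (e x))
      (fun x => V₀ i x * hA.eigenvalues x * V₀ j x) (fun x => rfl)).symm


lemma exists_thin_svd {m n : ℕ} (X : Mat m n) :
    ∃ (U : Mat m n) (V : Matrix (Fin n) (Fin n) ℝ),
      Vᵀ * V = 1 ∧
      Uᵀ * U = Matrix.diagonal (fun j => if svals X j = 0 then 0 else 1) ∧
      X = U * Matrix.diagonal (svals X) * Vᵀ := by
  classical
  obtain ⟨V, hVtV, hVVt, hA⟩ := exists_ordered_spectral (Xᵀ * X)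
    (Paper.isHermitian_transpose_mul_self X)
  set σ := svals X with hσ
  set lam := eigs (Xᵀ * X) (Paper.isHermitian_transpose_mul_self X) with hlam
  have hsq : ∀ j, σ j * σ j = lam j := fun j => sq_svals X j
  set M := X * V with hM
  have hMtM : Mᵀ * M = Matrix.diagonal lam := by
    have e1 : Mᵀ * M = Vᵀ * (Xᵀ * X) * V := by
      rw [hM, Matrix.transpose_mul, Matrix.mul_assoc, ← Matrix.mul_assoc Xᵀ X V,
        ← Matrix.mul_assoc]
    rw [e1, hA]
    calc Vᵀ * (V * Matrix.diagonal lam * Vᵀ) * V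
        = (Vᵀ * V) * Matrix.diagonal lam * (Vᵀ * V) := by
          simp only [Matrix.mul_assoc]
      _ = Matrix.diagonal lam := by rw [hVtV, Matrix.one_mul, Matrix.mul_one]
  have hMcol : ∀ j k, ∑ i, M i j * M i k = if j = k then lam j else 0 := by
    intro j k
    have := congrFun (congrFun hMtM j) k
    simpa [Matrix.mul_apply, Matrix.transpose_apply, Matrix.diagonal_apply] using this
  have colzero : ∀ j, σ j = 0 → ∀ i, M i j = 0 := by
    intro j hj i
    have h0 : ∑ i, M i j * M i j = 0 := by
      rw [hMcol j j, if_pos rfl, ← hsq j, hj, mul_zero]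
    have := (Finset.sum_eq_zero_iff_of_nonneg (fun i _ => mul_self_nonneg (M i j))).mp h0 i
      (Finset.mem_univ i)
    exact (mul_self_eq_zero).mp this
  refine ⟨Matrix.of fun i j => if σ j = 0 then 0 else M i j / σ j, V, hVtV, ?_, ?_⟩
  · ext j k
    simp only [Matrix.mul_apply, Matrix.transpose_apply, Matrix.diagonal_apply, Matrix.of_apply]
    by_cases hj : σ j = 0
    · have hz : ∀ i : Fin m,
          (if σ j = 0 then (0:ℝ) else M i j / σ j) * (if σ k = 0 then (0:ℝ) else M i k / σ k)
            = 0 := fun i => by rw [if_pos hj, zero_mul]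
      rw [Finset.sum_congr rfl (fun i _ => hz i), Finset.sum_const, smul_zero]
      by_cases hjk : j = k
      · subst hjk; rw [if_pos rfl, if_pos hj]
      · rw [if_neg hjk]
    by_cases hk : σ k = 0
    · have hz : ∀ i : Fin m,
          (if σ j = 0 then (0:ℝ) else M i j / σ j) * (if σ k = 0 then (0:ℝ) else M i k / σ k)
            = 0 := fun i => by rw [if_pos hk, mul_zero]
      rw [Finset.sum_congr rfl (fun i _ => hz i), Finset.sum_const, smul_zero]
      rw [if_neg (fun h => hj (by rw [h]; exact hk))]
    · simp only [hj, hk, if_false]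
      have e2 : ∑ i, M i j / σ j * (M i k / σ k) = (∑ i, M i j * M i k) / (σ j * σ k) := by
        rw [Finset.sum_div]
        exact Finset.sum_congr rfl fun i _ => by field_simp
      rw [e2, hMcol]
      by_cases hjk : j = k
      · subst hjk
        rw [if_pos rfl, if_pos rfl, ← hsq j, div_self (mul_ne_zero hj hj)]
      · rw [if_neg hjk, if_neg hjk, zero_div]
  · have hX : X = M * Vᵀ := by
      rw [hM, Matrix.mul_assoc, hVVt, Matrix.mul_one]
    rw [hX]
    congr 1
    ext i j
    simp only [Matrix.mul_diagonal, Matrix.of_apply]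
    by_cases hj : σ j = 0
    · simp [hj, colzero j hj i]
    · rw [if_neg hj, div_mul_cancel₀ _ hj]

lemma contract {p q : ℕ} (W : Matrix (Fin p) (Fin q) ℝ) (d : Fin q → ℝ) (hd : ∀ j, d j ≤ 1)
    (hW : Wᵀ * W = Matrix.diagonal d) (v : Fin p → ℝ) :
    ∑ j, (∑ i, W i j * v i) ^ 2 ≤ ∑ i, (v i) ^ 2 := by
  classical
  set w : Fin q → ℝ := fun j => ∑ i, W i j * v i with hw
  set z : Fin p → ℝ := fun i => ∑ j, W i j * w j with hz
  have hWW : ∀ j k, ∑ i, W i j * W i k = if j = k then d j else 0 := by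
    intro j k
    have := congrFun (congrFun hW j) k
    simpa [Matrix.mul_apply, Matrix.transpose_apply, Matrix.diagonal_apply] using this
  have key1 : ∑ i, z i ^ 2 = ∑ j, d j * w j ^ 2 := by
    calc ∑ i, z i ^ 2 = ∑ i, (∑ j, W i j * w j) * (∑ k, W i k * w k) := by
          simp [hz, pow_two]
      _ = ∑ i, ∑ j, ∑ k, (W i j * w j) * (W i k * w k) := by
          simp [Finset.sum_mul_sum]
      _ = ∑ j, ∑ k, ∑ i, (W i j * w j) * (W i k * w k) := by
          rw [Finset.sum_comm]
          exact Finset.sum_congr rfl fun j _ => Finset.sum_comm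
      _ = ∑ j, ∑ k, (w j * w k) * ∑ i, W i j * W i k := by
          refine Finset.sum_congr rfl fun j _ => Finset.sum_congr rfl fun k _ => ?_
          rw [Finset.mul_sum]
          exact Finset.sum_congr rfl fun i _ => by ring
      _ = ∑ j, d j * w j ^ 2 := by
          refine Finset.sum_congr rfl fun j _ => ?_
          rw [Finset.sum_eq_single j]
          · rw [hWW j j, if_pos rfl]; ring
          · intro k _ hk
            rw [hWW j k, if_neg (fun h => hk h.symm), mul_zero]
          · intro h; exact absurd (Finset.mem_univ j) h
  have key2 : ∑ j, w j ^ 2 = ∑ i, v i * z i := by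
    calc ∑ j, w j ^ 2 = ∑ j, w j * ∑ i, W i j * v i := by
          simp [pow_two]; rfl
      _ = ∑ j, ∑ i, v i * (W i j * w j) := by
          refine Finset.sum_congr rfl fun j _ => ?_
          rw [Finset.mul_sum]
          exact Finset.sum_congr rfl fun i _ => by ring
      _ = ∑ i, ∑ j, v i * (W i j * w j) := Finset.sum_comm
      _ = ∑ i, v i * z i := by
          refine Finset.sum_congr rfl fun i _ => ?_
          rw [hz, Finset.mul_sum]
  have hcs : (∑ i, v i * z i) ^ 2 ≤ (∑ i, v i ^ 2) * (∑ i, z i ^ 2) :=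
    Finset.sum_mul_sq_le_sq_mul_sq _ _ _
  have hzw : ∑ i, z i ^ 2 ≤ ∑ j, w j ^ 2 := by
    rw [key1]
    exact Finset.sum_le_sum fun j _ => by nlinarith [sq_nonneg (w j), hd j]
  have hS : (0:ℝ) ≤ ∑ j, w j ^ 2 := Finset.sum_nonneg fun j _ => sq_nonneg _
  have hv : (0:ℝ) ≤ ∑ i, v i ^ 2 := Finset.sum_nonneg fun i _ => sq_nonneg _
  rcases eq_or_lt_of_le hS with h0 | h0
  · rw [← h0]; exact hv
  · have : (∑ j, w j ^ 2) ^ 2 ≤ (∑ i, v i ^ 2) * (∑ j, w j ^ 2) := by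
      calc (∑ j, w j ^ 2) ^ 2 = (∑ i, v i * z i) ^ 2 := by rw [key2]
        _ ≤ (∑ i, v i ^ 2) * (∑ i, z i ^ 2) := hcs
        _ ≤ (∑ i, v i ^ 2) * (∑ j, w j ^ 2) := by
            exact mul_le_mul_of_nonneg_left hzw hv
    nlinarith

lemma swap4 {M : Type*} [AddCommMonoid M] (s : Finset ℕ) (f : ℕ → ℕ → ℕ → ℕ → M) :
    ∑ i ∈ s, ∑ j ∈ s, ∑ k ∈ s, ∑ l ∈ s, f i j k l
      = ∑ k ∈ s, ∑ l ∈ s, ∑ i ∈ s, ∑ j ∈ s, f i j k l := by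
  calc ∑ i ∈ s, ∑ j ∈ s, ∑ k ∈ s, ∑ l ∈ s, f i j k l
      = ∑ i ∈ s, ∑ k ∈ s, ∑ j ∈ s, ∑ l ∈ s, f i j k l :=
        Finset.sum_congr rfl fun i _ => Finset.sum_comm
    _ = ∑ k ∈ s, ∑ i ∈ s, ∑ j ∈ s, ∑ l ∈ s, f i j k l := Finset.sum_comm
    _ = ∑ k ∈ s, ∑ i ∈ s, ∑ l ∈ s, ∑ j ∈ s, f i j k l :=
        Finset.sum_congr rfl fun k _ => Finset.sum_congr rfl fun i _ => Finset.sum_comm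
    _ = ∑ k ∈ s, ∑ l ∈ s, ∑ i ∈ s, ∑ j ∈ s, f i j k l :=
        Finset.sum_congr rfl fun k _ => Finset.sum_comm

lemma telescope {n : ℕ} (A : ℕ → ℝ) (hAn : A n = 0) {i : ℕ} (hi : i ≤ n) :
    ∑ k ∈ Finset.Ico i n, (A k - A (k + 1)) = A i := by
  rw [Finset.sum_Ico_eq_sum_range]
  have := Finset.sum_range_sub' (fun j => A (i + j)) (n - i)
  calc ∑ k ∈ Finset.range (n - i), (A (i + k) - A (i + k + 1))
      = ∑ k ∈ Finset.range (n - i), ((fun j => A (i + j)) k - (fun j => A (i + j)) (k + 1)) := by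
        refine Finset.sum_congr rfl fun k _ => ?_
        rw [Nat.add_assoc]
    _ = A (i + 0) - A (i + (n - i)) := this
    _ = A i := by
        rw [Nat.add_zero, Nat.add_sub_cancel' hi, hAn, sub_zero]

lemma indicator_sum {n : ℕ} (A : ℕ → ℝ) (hAn : A n = 0) {i : ℕ} (hi : i < n) :
    A i = ∑ k ∈ Finset.range n, (if i ≤ k then A k - A (k + 1) else 0) := by
  rw [← Finset.sum_filter]
  have hf : (Finset.range n).filter (fun k => i ≤ k) = Finset.Ico i n := by
    ext x; simp [Finset.mem_filter, Finset.mem_Ico, Finset.mem_range, and_comm]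
  rw [hf, telescope A hAn (le_of_lt hi)]

lemma sub_rearr (n : ℕ) (A B : ℕ → ℝ) (hA : ∀ k, A (k + 1) ≤ A k) (hB : ∀ k, B (k + 1) ≤ B k)
    (hAn : A n = 0) (hBn : B n = 0) (E : ℕ → ℕ → ℝ) (hE0 : ∀ i j, 0 ≤ E i j)
    (hrow : ∀ i, ∑ j ∈ Finset.range n, E i j ≤ 1)
    (hcol : ∀ j, ∑ i ∈ Finset.range n, E i j ≤ 1) :
    ∑ i ∈ Finset.range n, ∑ j ∈ Finset.range n, E i j * (A i * B j)
      ≤ ∑ i ∈ Finset.range n, A i * B i := by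
  classical
  set R := Finset.range n with hR
  set δ : ℕ → ℝ := fun k => A k - A (k + 1) with hδ
  set ε : ℕ → ℝ := fun l => B l - B (l + 1) with hε
  have hδ0 : ∀ k, 0 ≤ δ k := fun k => sub_nonneg.mpr (hA k)
  have hε0 : ∀ l, 0 ≤ ε l := fun l => sub_nonneg.mpr (hB l)
  set ind : ℕ → ℕ → ℝ := fun a b => if a ≤ b then 1 else 0 with hind
  have expand : ∀ C : ℕ → ℕ → ℝ,
      ∑ i ∈ R, ∑ j ∈ R, C i j * (A i * B j)
        = ∑ k ∈ R, ∑ l ∈ R, (δ k * ε l) * (∑ i ∈ R, ∑ j ∈ R, ind i k * (ind j l * C i j)) := by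
    intro C
    have step1 : ∀ i ∈ R, ∀ j ∈ R, C i j * (A i * B j)
        = ∑ k ∈ R, ∑ l ∈ R, (if i ≤ k then δ k else 0) * ((if j ≤ l then ε l else 0) * C i j) := by
      intro i hi j hj
      rw [Finset.mem_range] at hi hj
      rw [indicator_sum A hAn hi, indicator_sum B hBn hj]
      rw [Finset.sum_mul_sum]
      rw [Finset.mul_sum]
      refine Finset.sum_congr rfl fun k _ => ?_
      rw [Finset.mul_sum]
      refine Finset.sum_congr rfl fun l _ => ?_
      simp only [hδ, hε]
      split_ifs <;> ring
    calc ∑ i ∈ R, ∑ j ∈ R, C i j * (A i * B j)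
        = ∑ i ∈ R, ∑ j ∈ R, ∑ k ∈ R, ∑ l ∈ R,
            (if i ≤ k then δ k else 0) * ((if j ≤ l then ε l else 0) * C i j) :=
          Finset.sum_congr rfl fun i hi => Finset.sum_congr rfl fun j hj => step1 i hi j hj
      _ = ∑ k ∈ R, ∑ l ∈ R, ∑ i ∈ R, ∑ j ∈ R,
            (if i ≤ k then δ k else 0) * ((if j ≤ l then ε l else 0) * C i j) := swap4 R _
      _ = ∑ k ∈ R, ∑ l ∈ R, (δ k * ε l) * (∑ i ∈ R, ∑ j ∈ R, ind i k * (ind j l * C i j)) := by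
          refine Finset.sum_congr rfl fun k _ => Finset.sum_congr rfl fun l _ => ?_
          rw [Finset.mul_sum]
          refine Finset.sum_congr rfl fun i _ => ?_
          rw [Finset.mul_sum]
          refine Finset.sum_congr rfl fun j _ => ?_
          simp only [hind]
          split_ifs <;> ring
  have rhs_id : ∑ i ∈ R, A i * B i
      = ∑ i ∈ R, ∑ j ∈ R, (if i = j then (1:ℝ) else 0) * (A i * B j) := by
    refine Finset.sum_congr rfl fun i hi => ?_
    rw [Finset.sum_congr rfl (fun j _ => by
      rw [show (if i = j then (1:ℝ) else 0) * (A i * B j)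
        = if i = j then A i * B j else 0 by split_ifs <;> ring])]
    rw [Finset.sum_ite_eq R i (fun j => A i * B j), if_pos hi]
  -- bounds on the partial sums
  have Sval : ∀ k l, (∑ i ∈ R, ∑ j ∈ R, ind i k * (ind j l * E i j))
      ≤ min (∑ i ∈ R, ind i k) (∑ j ∈ R, ind j l) := by
    intro k l
    refine le_min ?_ ?_
    · refine Finset.sum_le_sum fun i _ => ?_
      rw [← Finset.mul_sum]
      by_cases h : i ≤ k
      · simp only [hind, if_pos h, one_mul]
        calc ∑ j ∈ R, (if j ≤ l then (1:ℝ) else 0) * E i j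
            ≤ ∑ j ∈ R, E i j := by
              refine Finset.sum_le_sum fun j _ => ?_
              by_cases hj : j ≤ l
              · rw [if_pos hj, one_mul]
              · rw [if_neg hj, zero_mul]; exact hE0 i j
          _ ≤ 1 := hrow i
      · simp only [hind, if_neg h, zero_mul, le_refl]
    · rw [Finset.sum_comm]
      refine Finset.sum_le_sum fun j _ => ?_
      by_cases hj : j ≤ l
      · simp only [hind, if_pos hj]
        calc ∑ i ∈ R, (if i ≤ k then (1:ℝ) else 0) * (1 * E i j)
            ≤ ∑ i ∈ R, E i j := by
              refine Finset.sum_le_sum fun i _ => ?_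
              by_cases hik : i ≤ k
              · rw [if_pos hik, one_mul, one_mul]
              · rw [if_neg hik, zero_mul]; exact hE0 i j
          _ ≤ 1 := hcol j
      · have hzz : ∑ i ∈ R, ind i k * (ind j l * E i j) = 0 :=
          Finset.sum_eq_zero fun i _ => by simp only [hind, if_neg hj, zero_mul, mul_zero]
        rw [hzz]
        simp only [hind, if_neg hj, le_refl]
  have Tval : ∀ k l, k ∈ R → l ∈ R →
      (∑ i ∈ R, ∑ j ∈ R, ind i k * (ind j l * (if i = j then (1:ℝ) else 0)))
        = min (∑ i ∈ R, ind i k) (∑ j ∈ R, ind j l) := by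
    intro k l hk hl
    have inner : ∀ i ∈ R, ∑ j ∈ R, ind i k * (ind j l * (if i = j then (1:ℝ) else 0))
        = ind i k * ind i l := by
      intro i hi
      rw [Finset.sum_congr rfl (fun j _ => by
        rw [show ind i k * (ind j l * (if i = j then (1:ℝ) else 0))
          = if i = j then ind i k * ind j l else 0 by split_ifs <;> ring])]
      rw [Finset.sum_ite_eq R i (fun j => ind i k * ind j l), if_pos hi]
    rw [Finset.sum_congr rfl inner]
    have indsum : ∀ a, ∑ i ∈ R, ind i a = ((min (a + 1) n : ℕ) : ℝ) := by
      intro a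
      simp only [hind]
      rw [← Finset.sum_filter]
      rw [show (Finset.range n).filter (fun i => i ≤ a) = Finset.range (min (a + 1) n) by
        ext x; simp only [Finset.mem_filter, Finset.mem_range, Nat.lt_min, Nat.lt_succ_iff]; omega]
      simp
    have e1 : ∑ i ∈ R, ind i k * ind i l = ∑ i ∈ R, ind i (min k l) := by
      refine Finset.sum_congr rfl fun i _ => ?_
      simp only [hind, le_min_iff]
      by_cases h1 : i ≤ k <;> by_cases h2 : i ≤ l <;> simp [h1, h2]
    rw [e1, indsum, indsum, indsum]
    rw [Finset.mem_range] at hk hl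
    have h1 : min (k + 1) n = k + 1 := by omega
    have h2 : min (l + 1) n = l + 1 := by omega
    have h3 : min (min k l + 1) n = min (k + 1) (l + 1) := by omega
    rw [h1, h2, h3, Nat.cast_min]
  rw [expand E, rhs_id, expand (fun i j => if i = j then (1:ℝ) else 0)]
  refine Finset.sum_le_sum fun k hk => Finset.sum_le_sum fun l hl => ?_
  rw [Tval k l hk hl]
  exact mul_le_mul_of_nonneg_left (Sval k l) (mul_nonneg (hδ0 k) (hε0 l))

lemma sub_rearr_fin {n : ℕ} (a b : Fin n → ℝ) (ha : Antitone a) (hb : Antitone b)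
    (ha0 : ∀ i, 0 ≤ a i) (hb0 : ∀ i, 0 ≤ b i) (E : Fin n → Fin n → ℝ)
    (hE0 : ∀ i j, 0 ≤ E i j) (hrow : ∀ i, ∑ j, E i j ≤ 1) (hcol : ∀ j, ∑ i, E i j ≤ 1) :
    ∑ i, ∑ j, E i j * (a i * b j) ≤ ∑ i, a i * b i := by
  classical
  set A : ℕ → ℝ := fun k => if h : k < n then a ⟨k, h⟩ else 0 with hAdef
  set B : ℕ → ℝ := fun k => if h : k < n then b ⟨k, h⟩ else 0 with hBdef
  set F : ℕ → ℕ → ℝ := fun k l =>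
    if h : k < n ∧ l < n then E ⟨k, h.1⟩ ⟨l, h.2⟩ else 0 with hFdef
  have hAv : ∀ i : Fin n, A i = a i := fun i => by simp [hAdef, i.isLt]
  have hBv : ∀ i : Fin n, B i = b i := fun i => by simp [hBdef, i.isLt]
  have hFv : ∀ i j : Fin n, F i j = E i j := fun i j => by simp [hFdef, i.isLt, j.isLt]
  have step : ∀ (g : ℕ → ℝ), ∑ i : Fin n, g i = ∑ k ∈ Finset.range n, g k :=
    fun g => Fin.sum_univ_eq_sum_range g n
  have hAstep : ∀ k, A (k + 1) ≤ A k := by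
    intro k
    by_cases h1 : k + 1 < n
    · have h0 : k < n := by omega
      simp only [hAdef, dif_pos h1, dif_pos h0]
      exact ha (by simp [Fin.le_def])
    · by_cases h0 : k < n
      · simp only [hAdef, dif_neg h1, dif_pos h0]
        exact ha0 _
      · simp [hAdef, h1, h0]
  have hBstep : ∀ k, B (k + 1) ≤ B k := by
    intro k
    by_cases h1 : k + 1 < n
    · have h0 : k < n := by omega
      simp only [hBdef, dif_pos h1, dif_pos h0]
      exact hb (by simp [Fin.le_def])
    · by_cases h0 : k < n
      · simp only [hBdef, dif_neg h1, dif_pos h0]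
        exact hb0 _
      · simp [hBdef, h1, h0]
  have hAn : A n = 0 := by simp [hAdef]
  have hBn : B n = 0 := by simp [hBdef]
  have hF0 : ∀ k l, 0 ≤ F k l := by
    intro k l
    by_cases h : k < n ∧ l < n
    · simp only [hFdef, dif_pos h]; exact hE0 _ _
    · simp [hFdef, h]
  have hFrow : ∀ k, ∑ l ∈ Finset.range n, F k l ≤ 1 := by
    intro k
    by_cases hk : k < n
    · calc ∑ l ∈ Finset.range n, F k l = ∑ l : Fin n, F k l := (step _).symm
        _ = ∑ l : Fin n, E ⟨k, hk⟩ l := by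
            refine Finset.sum_congr rfl fun l _ => ?_
            simp [hFdef, hk, l.isLt]
        _ ≤ 1 := hrow _
    · calc ∑ l ∈ Finset.range n, F k l
          = 0 := Finset.sum_eq_zero fun l _ => by simp [hFdef, hk]
        _ ≤ 1 := zero_le_one
  have hFcol : ∀ l, ∑ k ∈ Finset.range n, F k l ≤ 1 := by
    intro l
    by_cases hl : l < n
    · calc ∑ k ∈ Finset.range n, F k l = ∑ k : Fin n, F k l := (step _).symm
        _ = ∑ k : Fin n, E k ⟨l, hl⟩ := by
            refine Finset.sum_congr rfl fun k _ => ?_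
            simp [hFdef, hl, k.isLt]
        _ ≤ 1 := hcol _
    · calc ∑ k ∈ Finset.range n, F k l
          = 0 := Finset.sum_eq_zero fun k _ => by simp [hFdef, hl]
        _ ≤ 1 := zero_le_one
  have main := sub_rearr n A B hAstep hBstep hAn hBn F hF0 hFrow hFcol
  calc ∑ i, ∑ j, E i j * (a i * b j)
      = ∑ i : Fin n, ∑ j : Fin n, F i j * (A i * B j) := by
        refine Finset.sum_congr rfl fun i _ => Finset.sum_congr rfl fun j _ => ?_
        rw [hAv, hBv, hFv]
    _ = ∑ k ∈ Finset.range n, ∑ l ∈ Finset.range n, F k l * (A k * B l) := by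
        rw [← step]
        refine Finset.sum_congr rfl fun i _ => ?_
        exact step (fun l => F i l * (A i * B l))
    _ ≤ ∑ k ∈ Finset.range n, A k * B k := main
    _ = ∑ i : Fin n, A i * B i := (step _).symm
    _ = ∑ i, a i * b i := Finset.sum_congr rfl fun i _ => by rw [hAv, hBv]


theorem stmt0' {m n : ℕ} (hmn : n ≤ m) (X Y : Mat m n) :
    finner X Y ≤ vinner (svals X) (svals Y) := by
  classical
  obtain ⟨Ux, Vx, hVx, hUx, hXd⟩ := exists_thin_svd X
  obtain ⟨Uy, Vy, hVy, hUy, hYd⟩ := exists_thin_svd Y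
  set σX := svals X with hσX
  set σY := svals Y with hσY
  set P : Matrix (Fin n) (Fin n) ℝ := Uxᵀ * Uy with hPdef
  set Q : Matrix (Fin n) (Fin n) ℝ := Vxᵀ * Vy with hQdef
  have hPapp : ∀ i j, P i j = ∑ p, Ux p i * Uy p j := by
    intro i j
    simp [hPdef, Matrix.mul_apply, Matrix.transpose_apply]
  have hQapp : ∀ i j, Q i j = ∑ p, Vx p i * Vy p j := by
    intro i j
    simp [hQdef, Matrix.mul_apply, Matrix.transpose_apply]
  -- trace identity
  have t1 : finner X Y = Matrix.trace (Xᵀ * Y) := by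
    simp only [finner, Matrix.trace, Matrix.diag, Matrix.mul_apply, Matrix.transpose_apply]
    exact Finset.sum_comm
  have hXt : Xᵀ = Vx * Matrix.diagonal σX * Uxᵀ := by
    rw [hXd]
    simp [Matrix.transpose_mul, Matrix.transpose_transpose, Matrix.diagonal_transpose,
      Matrix.mul_assoc]
  have t2 : Xᵀ * Y = Vx * ((Matrix.diagonal σX * P * Matrix.diagonal σY) * Vyᵀ) := by
    rw [hXt, hYd, hPdef]
    simp only [Matrix.mul_assoc]
  have t3 : Matrix.trace (Xᵀ * Y)
      = Matrix.trace ((Matrix.diagonal σX * P * Matrix.diagonal σY) * Qᵀ) := by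
    rw [t2, Matrix.trace_mul_comm]
    congr 1
    rw [Matrix.mul_assoc]
    congr 1
    rw [hQdef, Matrix.transpose_mul, Matrix.transpose_transpose]
  have entry : ∀ i j, (Matrix.diagonal σX * P * Matrix.diagonal σY) i j
      = σX i * P i j * σY j := by
    intro i j
    rw [Matrix.mul_diagonal, Matrix.diagonal_mul]
  have t4 : Matrix.trace ((Matrix.diagonal σX * P * Matrix.diagonal σY) * Qᵀ)
      = ∑ i, ∑ j, (σX i * σY j) * (P i j * Q i j) := by
    simp only [Matrix.trace, Matrix.diag]
    refine Finset.sum_congr rfl fun i _ => ?_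
    rw [Matrix.mul_apply]
    refine Finset.sum_congr rfl fun j _ => ?_
    rw [Matrix.transpose_apply, entry]
    ring
  -- row/column bounds
  have hUxd : ∀ i, ∑ p, Ux p i ^ 2 ≤ 1 := by
    intro i
    have h := congrFun (congrFun hUx i) i
    simp only [Matrix.mul_apply, Matrix.transpose_apply, Matrix.diagonal_apply_eq] at h
    have : ∑ p, Ux p i ^ 2 = ∑ p, Ux p i * Ux p i :=
      Finset.sum_congr rfl fun p _ => by ring
    rw [this, h]
    split_ifs <;> norm_num
  have hUyd : ∀ j, ∑ p, Uy p j ^ 2 ≤ 1 := by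
    intro j
    have h := congrFun (congrFun hUy j) j
    simp only [Matrix.mul_apply, Matrix.transpose_apply, Matrix.diagonal_apply_eq] at h
    have : ∑ p, Uy p j ^ 2 = ∑ p, Uy p j * Uy p j :=
      Finset.sum_congr rfl fun p _ => by ring
    rw [this, h]
    split_ifs <;> norm_num
  have hVxd : ∀ i, ∑ p, Vx p i ^ 2 ≤ 1 := by
    intro i
    have h := congrFun (congrFun hVx i) i
    simp only [Matrix.mul_apply, Matrix.transpose_apply, Matrix.one_apply_eq] at h
    have : ∑ p, Vx p i ^ 2 = ∑ p, Vx p i * Vx p i :=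
      Finset.sum_congr rfl fun p _ => by ring
    rw [this, h]
  have hVyd : ∀ j, ∑ p, Vy p j ^ 2 ≤ 1 := by
    intro j
    have h := congrFun (congrFun hVy j) j
    simp only [Matrix.mul_apply, Matrix.transpose_apply, Matrix.one_apply_eq] at h
    have : ∑ p, Vy p j ^ 2 = ∑ p, Vy p j * Vy p j :=
      Finset.sum_congr rfl fun p _ => by ring
    rw [this, h]
  have hProw : ∀ i, ∑ j, P i j ^ 2 ≤ 1 := by
    intro i
    have hc := contract Uy (fun j => if svals Y j = 0 then 0 else 1)
      (fun j => by split_ifs <;> norm_num) hUy (fun p => Ux p i)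
    calc ∑ j, P i j ^ 2 = ∑ j, (∑ p, Uy p j * Ux p i) ^ 2 := by
          refine Finset.sum_congr rfl fun j _ => ?_
          rw [hPapp]
          congr 1
          exact Finset.sum_congr rfl fun p _ => mul_comm _ _
      _ ≤ ∑ p, Ux p i ^ 2 := hc
      _ ≤ 1 := hUxd i
  have hPcol : ∀ j, ∑ i, P i j ^ 2 ≤ 1 := by
    intro j
    have hc := contract Ux (fun i => if svals X i = 0 then 0 else 1)
      (fun i => by split_ifs <;> norm_num) hUx (fun p => Uy p j)
    calc ∑ i, P i j ^ 2 = ∑ i, (∑ p, Ux p i * Uy p j) ^ 2 := by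
          refine Finset.sum_congr rfl fun i _ => ?_
          rw [hPapp]
      _ ≤ ∑ p, Uy p j ^ 2 := hc
      _ ≤ 1 := hUyd j
  have hQrow : ∀ i, ∑ j, Q i j ^ 2 ≤ 1 := by
    intro i
    have hc := contract Vy (fun _ => (1:ℝ)) (fun _ => le_refl 1)
      (by rw [hVy, Matrix.diagonal_one]) (fun p => Vx p i)
    calc ∑ j, Q i j ^ 2 = ∑ j, (∑ p, Vy p j * Vx p i) ^ 2 := by
          refine Finset.sum_congr rfl fun j _ => ?_
          rw [hQapp]
          congr 1
          exact Finset.sum_congr rfl fun p _ => mul_comm _ _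
      _ ≤ ∑ p, Vx p i ^ 2 := hc
      _ ≤ 1 := hVxd i
  have hQcol : ∀ j, ∑ i, Q i j ^ 2 ≤ 1 := by
    intro j
    have hc := contract Vx (fun _ => (1:ℝ)) (fun _ => le_refl 1)
      (by rw [hVx, Matrix.diagonal_one]) (fun p => Vy p j)
    calc ∑ i, Q i j ^ 2 = ∑ i, (∑ p, Vx p i * Vy p j) ^ 2 := by
          refine Finset.sum_congr rfl fun i _ => ?_
          rw [hQapp]
      _ ≤ ∑ p, Vy p j ^ 2 := hc
      _ ≤ 1 := hVyd j
  -- final chain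
  set E : Fin n → Fin n → ℝ := fun i j => (P i j ^ 2 + Q i j ^ 2) / 2 with hEdef
  have hE0 : ∀ i j, 0 ≤ E i j := fun i j => by positivity
  have hErow : ∀ i, ∑ j, E i j ≤ 1 := by
    intro i
    have : ∑ j, E i j = ((∑ j, P i j ^ 2) + ∑ j, Q i j ^ 2) / 2 := by
      rw [hEdef, ← Finset.sum_div, Finset.sum_add_distrib]
    rw [this]
    linarith [hProw i, hQrow i]
  have hEcol : ∀ j, ∑ i, E i j ≤ 1 := by
    intro j
    have : ∑ i, E i j = ((∑ i, P i j ^ 2) + ∑ i, Q i j ^ 2) / 2 := by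
      rw [hEdef, ← Finset.sum_div, Finset.sum_add_distrib]
    rw [this]
    linarith [hPcol j, hQcol j]
  calc finner X Y = ∑ i, ∑ j, (σX i * σY j) * (P i j * Q i j) := by rw [t1, t3, t4]
    _ ≤ ∑ i, ∑ j, E i j * (σX i * σY j) := by
        refine Finset.sum_le_sum fun i _ => Finset.sum_le_sum fun j _ => ?_
        have h1 : 0 ≤ σX i * σY j := mul_nonneg (svals_nonneg X i) (svals_nonneg Y j)
        have h2 : P i j * Q i j ≤ (P i j ^ 2 + Q i j ^ 2) / 2 := by
          nlinarith [sq_nonneg (P i j - Q i j)]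
        have h3 := mul_le_mul_of_nonneg_left h2 h1
        rw [hEdef]
        nlinarith [h3]
    _ ≤ ∑ i, σX i * σY i :=
        sub_rearr_fin σX σY (svals_antitone X) (svals_antitone Y)
          (svals_nonneg X) (svals_nonneg Y) E hE0 hErow hEcol
    _ = vinner (svals X) (svals Y) := rfl



end Paper

open Paper

/-- Von Neumann's trace inequality: `⟨X, Y⟩ ≤ ⟨σ(X), σ(Y)⟩`. -/
theorem stmt0 {m n : ℕ} (hmn : n ≤ m) (X Y : Mat m n) :
    finner X Y ≤ vinner (svals X) (svals Y) :=
  Paper.stmt0' hmn X Y
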